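/- For every positive integer n, (x+1)·s_n(x) = S_n(x), where s_n(x) = ∑_{k=1}^n N(n,k) x^{k-1}(x+1)^{n-k} with N(n,k) = (1/n) C(n,k) C(n,k-1), and S_n(x) = ∑_{k=0}^n C(n,k) C(n+k,k) x^k/(k+1). -/

import Mathlib

open Finset Polynomial

lemma vand (n m : ℕ) : ∑ j ∈ range (m+1), m.choose j * n.choose (j+1) = (n+m).choose (m+1) := by
  rw [Nat.add_choose_eq, Finset.Nat.sum_antidiagonal_eq_sum_range_succ_mk]
  conv_rhs => rw [Finset.sum_range_succ']
  simp only [Nat.choose_zero_right, Nat.choose_succ_self, one_mul, mul_zero, zero_mul, Nat.sub_zero, add_zero,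
    Nat.succ_sub_succ]
  apply Finset.sum_congr rfl
  intro j hj
  rw [mul_comm, Nat.choose_symm (by simpa [Nat.lt_succ_iff] using hj)]

lemma key (n m : ℕ) (hn : 1 ≤ n) (hm : m ≤ n) :
    ∑ j ∈ range (m+1),
      (1/(n:ℚ)) * (n.choose (1+j) : ℚ) * (n.choose j : ℚ) * ((n-j).choose (m-j) : ℚ)
      = (n.choose m : ℚ) * ((n+m).choose m : ℚ) / ((m:ℚ)+1) := by
  have step : ∑ j ∈ range (m+1),
      (1/(n:ℚ)) * (n.choose (1+j) : ℚ) * (n.choose j : ℚ) * ((n-j).choose (m-j) : ℚ)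
      = (1/(n:ℚ)) * (n.choose m : ℚ) *
        ((∑ j ∈ range (m+1), m.choose j * n.choose (j+1) : ℕ) : ℚ) := by
    push_cast
    rw [Finset.mul_sum]
    apply Finset.sum_congr rfl
    intro j hj
    have hjm : j ≤ m := Nat.lt_succ_iff.mp (Finset.mem_range.mp hj)
    have h2 : n.choose j * ((n-j).choose (m-j)) = n.choose m * m.choose j :=
      (Nat.choose_mul (n := n) hjm).symm
    have h2' : (n.choose j : ℚ) * ((n-j).choose (m-j) : ℚ)
        = (n.choose m : ℚ) * (m.choose j : ℚ) := by exact_mod_cast h2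
    calc (1/(n:ℚ)) * (n.choose (1+j) : ℚ) * (n.choose j : ℚ) * ((n-j).choose (m-j) : ℚ)
        = (1/(n:ℚ)) * (n.choose (1+j) : ℚ) * ((n.choose j : ℚ) * ((n-j).choose (m-j) : ℚ)) := by
          ring
      _ = (1/(n:ℚ)) * (n.choose (1+j) : ℚ) * ((n.choose m : ℚ) * (m.choose j : ℚ)) := by
          rw [h2']
      _ = _ := by rw [add_comm 1 j]; ring
  rw [step, vand]
  have h3 : ((n+m).choose (m+1)) * (m+1) = (n+m).choose m * n := by
    rw [Nat.choose_succ_right_eq]; congr 1; omega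
  have h3' : ((n+m).choose (m+1) : ℚ) * ((m:ℚ)+1) = ((n+m).choose m : ℚ) * n := by
    exact_mod_cast h3
  have hn0 : (n:ℚ) ≠ 0 := Nat.cast_ne_zero.mpr (by omega)
  have hm0 : (m:ℚ)+1 ≠ 0 := by positivity
  field_simp
  linear_combination (n.choose m : ℚ) * h3'

theorem little_schroeder_mul (n : ℕ) (hn : 1 ≤ n) :
    (X + 1) * (∑ k ∈ Icc 1 n,
        C ((1 / (n : ℚ)) * (n.choose k : ℚ) * (n.choose (k - 1) : ℚ)) *
          X ^ (k - 1) * (X + 1) ^ (n - k)) =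
    ∑ k ∈ range (n + 1),
      C ((n.choose k : ℚ) * ((n + k).choose k : ℚ) / (k + 1 : ℚ)) * X ^ k := by
  rw [← Finset.Ico_add_one_right_eq_Icc, Finset.sum_Ico_eq_sum_range]
  simp only [Nat.add_sub_cancel, Nat.add_sub_cancel_left, Nat.succ_sub_one]
  rw [Finset.mul_sum]
  have hterm : ∀ j ∈ range n,
      (X+1) * (C ((1/(n:ℚ)) * (n.choose (1+j) : ℚ) * (n.choose j : ℚ)) * X^j * (X+1)^(n-(1+j)))
      = C ((1/(n:ℚ)) * (n.choose (1+j) : ℚ) * (n.choose j : ℚ)) * (X+1)^(n-j) * X^j := by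
    intro j hj
    have hj' : j < n := Finset.mem_range.mp hj
    have h : n - j = (n - (1+j)) + 1 := by omega
    rw [h, pow_succ]; ring
  rw [Finset.sum_congr rfl hterm]
  rw [Polynomial.ext_iff]
  intro m
  rw [Polynomial.finset_sum_coeff, Polynomial.finset_sum_coeff]
  simp only [coeff_mul_X_pow', coeff_C_mul, coeff_X_add_one_pow, Polynomial.coeff_C]
  have hrhs : ∀ x ∈ range (n+1),
      (if x ≤ m then (if m - x = 0 then
          (n.choose x : ℚ) * ((n + x).choose x : ℚ) / ((x:ℚ) + 1) else 0) else 0)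
      = if x = m then (n.choose x : ℚ) * ((n + x).choose x : ℚ) / ((x:ℚ) + 1) else 0 := by
    intro x hx
    by_cases h : x = m
    · subst h; simp
    · by_cases h1 : x ≤ m
      · rw [if_pos h1, if_neg (by omega), if_neg h]
      · rw [if_neg h1, if_neg h]
  rw [Finset.sum_congr rfl hrhs, Finset.sum_ite_eq' (range (n+1)) m]
  by_cases hmn : m ≤ n
  · rw [if_pos (by simpa [Finset.mem_range, Nat.lt_succ_iff] using hmn)]
    have e1 : ∑ j ∈ range n,
          (if j ≤ m then (1/(n:ℚ)) * (n.choose (1+j) : ℚ) * (n.choose j : ℚ)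
            * ((n-j).choose (m-j) : ℚ) else 0)
        = ∑ j ∈ range (n+1),
          (if j ≤ m then (1/(n:ℚ)) * (n.choose (1+j) : ℚ) * (n.choose j : ℚ)
            * ((n-j).choose (m-j) : ℚ) else 0) := by
      apply Finset.sum_subset (Finset.range_subset_range.mpr (by omega))
      intro x hx hxn
      have hxn' : x = n := by
        simp only [Finset.mem_range] at hx hxn; omega
      subst hxn'
      split
      · rw [Nat.choose_eq_zero_of_lt (by omega)]
        simp
      · rfl
    rw [e1, ← Finset.sum_filter]
    have e2 : (range (n+1)).filter (· ≤ m) = range (m+1) := by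
      ext x; simp only [Finset.mem_filter, Finset.mem_range, Nat.lt_succ_iff]
      constructor
      · rintro ⟨_, h⟩; exact h
      · intro h; exact ⟨h.trans hmn, h⟩
    rw [e2]
    exact key n m hn hmn
  · rw [if_neg (by simp [Finset.mem_range]; omega)]
    apply Finset.sum_eq_zero
    intro j hj
    have hj' : j < n := Finset.mem_range.mp hj
    have hjm : j ≤ m := by omega
    have hlt : n - j < m - j := by omega
    rw [if_pos hjm, Nat.choose_eq_zero_of_lt hlt]
    simp
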